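/- Let A ⊆ ℝⁿ be a convex body and (Aʲ) a sequence of convex bodies with Aʲ ⊇ A^{j+1} ⊇ A for all j and d_H(A, Aʲ) → 0. Then for every t with 0 ≤ t < r(A), the inner parallel bodies satisfy d_H(A_t, Aʲ_t) → 0 as j → ∞, where A_t = A ⊖ tB. -/

import Mathlib

open Filter

/-- Inner parallel body (Minkowski erosion by the ball of radius `t`). -/
def innerParallel {n : ℕ} (A : Set (EuclideanSpace ℝ (Fin n))) (t : ℝ) :
    Set (EuclideanSpace ℝ (Fin n)) :=
  {x | Metric.closedBall x t ⊆ A}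

/-- The inradius of a set: the largest radius of a ball contained in it. -/
noncomputable def inradius {n : ℕ} (A : Set (EuclideanSpace ℝ (Fin n))) : ℝ :=
  sSup {r : ℝ | ∃ c, Metric.closedBall c r ⊆ A}

/-- Key quantitative lemma: if `A` contains the ball `B(c, r)`, `t < r`, and every point of
`B` is within `ε` of `A`, then any center of a `t`-ball inside `B` can be moved a distance
`(ε / (r - t + ε)) * dist x c` to become a center of a `t`-ball inside `A`. -/
lemma approx_center {E : Type*} [NormedAddCommGroup E] [NormedSpace ℝ E]
    {A B : Set E} (hA : Convex ℝ A) {c : E} {r t ε : ℝ}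
    (hball : Metric.closedBall c r ⊆ A) (htr : t < r) (hε : 0 < ε)
    (hnear : ∀ b ∈ B, ∃ a ∈ A, dist b a ≤ ε)
    {x : E} (hx : Metric.closedBall x t ⊆ B) :
    ∃ x' : E, Metric.closedBall x' t ⊆ A ∧
      dist x x' ≤ (ε / (r - t + ε)) * dist x c := by
  have hden : 0 < r - t + ε := by linarith
  obtain ⟨L, hLdef⟩ : ∃ L : ℝ, L = ε / (r - t + ε) := ⟨_, rfl⟩
  have hL0 : 0 < L := hLdef ▸ div_pos hε hden
  have hL1 : L ≤ 1 := by
    rw [hLdef, div_le_one hden]; linarith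
  have hLkey : L * ((r - t) / ε) = 1 - L := by
    rw [hLdef]; field_simp; ring
  refine ⟨(1 - L) • x + L • c, ?_, ?_⟩
  · intro y hy
    set v : E := y - ((1 - L) • x + L • c) with hv
    have hvnorm : ‖v‖ ≤ t := by
      rw [Metric.mem_closedBall, dist_eq_norm] at hy
      exact hy
    have hxvB : x + v ∈ B := by
      apply hx
      rw [Metric.mem_closedBall, dist_eq_norm]
      simpa using hvnorm
    obtain ⟨a, haA, hda⟩ := hnear _ hxvB
    set e : E := (x + v) - a with he
    have henorm : ‖e‖ ≤ ε := by
      rw [he, ← dist_eq_norm]; exact hda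
    set z : E := c + v + ((r - t) / ε) • e with hz
    have hzA : z ∈ A := by
      apply hball
      rw [Metric.mem_closedBall, dist_eq_norm]
      have : z - c = v + ((r - t) / ε) • e := by rw [hz]; abel
      rw [this]
      calc ‖v + ((r - t) / ε) • e‖ ≤ ‖v‖ + ‖((r - t) / ε) • e‖ := norm_add_le _ _
        _ ≤ t + ((r - t) / ε) * ε := by
            have h1 : ‖((r - t) / ε) • e‖ = ((r - t) / ε) * ‖e‖ := by
              rw [norm_smul, Real.norm_eq_abs,
                abs_of_nonneg (div_nonneg (by linarith) hε.le)]
            rw [h1]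
            have h2 : ((r - t) / ε) * ‖e‖ ≤ ((r - t) / ε) * ε :=
              mul_le_mul_of_nonneg_left henorm (div_nonneg (by linarith) hε.le)
            linarith
        _ = r := by field_simp; ring
    have hcomb : (1 - L) • a + L • z = y := by
      have ha' : a = x + v - e := by rw [he]; abel
      have expand : (1 - L) • a + L • z
          = (1 - L) • x + L • c + v + (L * ((r - t) / ε) - (1 - L)) • e := by
        rw [ha', hz]
        module
      rw [expand, hLkey, sub_self, zero_smul, add_zero, hv]
      abel
    have := hA haA hzA (by linarith : (0:ℝ) ≤ 1 - L) (le_of_lt hL0) (by ring)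
    rwa [hcomb] at this
  · have : x - ((1 - L) • x + L • c) = L • (x - c) := by module
    rw [dist_eq_norm, this, norm_smul, Real.norm_eq_abs, abs_of_pos hL0, ← dist_eq_norm,
      hLdef]

theorem stmt_5 {n : ℕ} (A : Set (EuclideanSpace ℝ (Fin n)))
    (Aseq : ℕ → Set (EuclideanSpace ℝ (Fin n)))
    (hAc : IsCompact A) (hAconv : Convex ℝ A) (hAint : (interior A).Nonempty)
    (hseqc : ∀ j, IsCompact (Aseq j)) (hseqconv : ∀ j, Convex ℝ (Aseq j))
    (hseqint : ∀ j, (interior (Aseq j)).Nonempty)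
    (hnested : ∀ j, Aseq (j + 1) ⊆ Aseq j) (hcontains : ∀ j, A ⊆ Aseq j)
    (hconv : Tendsto (fun j => Metric.hausdorffDist A (Aseq j)) atTop (nhds 0)) :
    ∀ t : ℝ, 0 ≤ t → t < inradius A →
      Tendsto (fun j => Metric.hausdorffDist (innerParallel A t) (innerParallel (Aseq j) t))
        atTop (nhds 0) := by
  intro t ht0 htr
  -- extract a ball of radius r' > t inside A
  have hSne : ({r : ℝ | ∃ c, Metric.closedBall c r ⊆ A}).Nonempty := by
    refine ⟨-1, 0, ?_⟩
    rw [Metric.closedBall_eq_empty.2 (by norm_num)]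
    exact Set.empty_subset _
  obtain ⟨r', ⟨c, hball⟩, htr'⟩ := exists_lt_of_lt_csSup hSne htr
  have hr'0 : 0 ≤ r' := le_trans ht0 (le_of_lt htr')
  have hcA : c ∈ A := hball (Metric.mem_closedBall_self hr'0)
  have hAne : A.Nonempty := ⟨c, hcA⟩
  have hAbd : Bornology.IsBounded A := hAc.isBounded
  set M : ℝ := Metric.diam A + 1 with hM
  have hM1 : 1 ≤ M := by
    have := Metric.diam_nonneg (s := A); linarith
  have hcInner : c ∈ innerParallel A t := by
    intro y hy
    exact hball (Metric.closedBall_subset_closedBall (le_of_lt htr') hy)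
  set δ : ℝ := r' - t with hδ
  have hδ0 : 0 < δ := by rw [hδ]; linarith
  rw [NormedAddCommGroup.tendsto_nhds_zero]
  intro η hη
  set ε : ℝ := min 1 (η * δ / (2 * M)) with hε
  have hε0 : 0 < ε := by
    apply lt_min one_pos
    positivity
  have hε1 : ε ≤ 1 := min_le_left _ _
  have hε2 : ε * (2 * M) ≤ η * δ := by
    have h := min_le_right 1 (η * δ / (2 * M))
    rw [← hε] at h
    rw [← le_div_iff₀ (by positivity)]
    exact h
  have hev : ∀ᶠ j in atTop, Metric.hausdorffDist A (Aseq j) < ε := by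
    have := Metric.tendsto_nhds.1 hconv ε hε0
    filter_upwards [this] with j hj
    calc Metric.hausdorffDist A (Aseq j)
        ≤ |Metric.hausdorffDist A (Aseq j) - 0| := by
          rw [sub_zero]; exact le_abs_self _
      _ < ε := by
          rw [Real.dist_eq] at hj; exact hj
  filter_upwards [hev] with j hj
  have hAjne : (Aseq j).Nonempty := ⟨c, hcontains j hcA⟩
  have hAjbd : Bornology.IsBounded (Aseq j) := (hseqc j).isBounded
  have hfin : EMetric.hausdorffEdist (Aseq j) A ≠ ⊤ :=
    Metric.hausdorffEdist_ne_top_of_nonempty_of_bounded hAjne hAne hAjbd hAbd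
  have hnear : ∀ b ∈ Aseq j, ∃ a ∈ A, dist b a ≤ ε := by
    intro b hb
    obtain ⟨a, haA, hd⟩ := Metric.exists_dist_lt_of_hausdorffDist_lt hb
      (by rwa [Metric.hausdorffDist_comm] : Metric.hausdorffDist (Aseq j) A < ε) hfin
    exact ⟨a, haA, le_of_lt hd⟩
  set L : ℝ := ε / (δ + ε) with hLdef
  have hL0 : 0 ≤ L := by positivity
  have hbound : Metric.hausdorffDist (innerParallel A t) (innerParallel (Aseq j) t)
      ≤ L * M := by
    apply Metric.hausdorffDist_le_of_mem_dist (by positivity)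
    · intro x hxmem
      refine ⟨x, ?_, by simp; positivity⟩
      intro y hy
      exact hcontains j (hxmem hy)
    · intro x hxmem
      have hδε : r' - t + ε = δ + ε := by rw [hδ]
      obtain ⟨x', hx'A, hdist⟩ := approx_center hAconv hball htr' hε0 hnear hxmem
      refine ⟨x', hx'A, ?_⟩
      rw [hδε] at hdist
      refine le_trans hdist ?_
      apply mul_le_mul_of_nonneg_left _ hL0
      -- dist x c ≤ M
      have hxAj : x ∈ Aseq j := hxmem (Metric.mem_closedBall_self ht0)
      obtain ⟨a, haA, hda⟩ := hnear x hxAj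
      have hdac : dist a c ≤ Metric.diam A := Metric.dist_le_diam_of_mem hAbd haA hcA
      calc dist x c ≤ dist x a + dist a c := dist_triangle _ _ _
        _ ≤ ε + Metric.diam A := add_le_add hda hdac
        _ ≤ M := by rw [hM]; linarith
  have hLM : L * M < η := by
    rw [hLdef, div_mul_eq_mul_div, div_lt_iff₀ (by positivity)]
    nlinarith [mul_pos hε0 (lt_of_lt_of_le one_pos hM1), mul_pos hη hε0]
  have hnn : 0 ≤ Metric.hausdorffDist (innerParallel A t) (innerParallel (Aseq j) t) :=
    Metric.hausdorffDist_nonneg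
  rw [Real.norm_eq_abs, abs_of_nonneg hnn]
  exact lt_of_le_of_lt hbound hLM
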